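/- Let M be a nonzero comultiplication R-module whose large sum graph Ǵ(M) is connected (and non-null). Then the diameter of Ǵ(M) is at most 2. -/

import Mathlib

/-- `M` is a comultiplication `R`-module: every submodule is of the form `(0 :_M I)`. -/
def IsComultiplication (R M : Type*) [CommRing R] [AddCommGroup M] [Module R M] : Prop :=
  ∀ N : Submodule R M, ∃ I : Ideal R, ∀ m : M, m ∈ N ↔ ∀ r ∈ I, r • m = 0

/-- A submodule is large (essential) if it meets every nonzero submodule nontrivially. -/
def IsLarge {R M : Type*} [CommRing R] [AddCommGroup M] [Module R M]
    (N : Submodule R M) : Prop :=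
  ∀ L : Submodule R M, L ≠ ⊥ → N ⊓ L ≠ ⊥

/-- The vertices of the large sum graph: nonzero non-large submodules. -/
abbrev LargeSumVtx (R M : Type*) [CommRing R] [AddCommGroup M] [Module R M] :=
  {N : Submodule R M // N ≠ ⊥ ∧ ¬ IsLarge N}

/-- The large sum graph: distinct nonzero non-large submodules `N, K` are adjacent
iff `N + K` is not large. -/
def largeSumGraph (R M : Type*) [CommRing R] [AddCommGroup M] [Module R M] :
    SimpleGraph (LargeSumVtx R M) where
  Adj N K := N ≠ K ∧ ¬ IsLarge (N.1 ⊔ K.1)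
  symm := ⟨fun a b ⟨h1, h2⟩ => ⟨h1.symm, by rwa [sup_comm]⟩⟩
  loopless := ⟨fun a h => h.1 rfl⟩

section Aux

variable {R M : Type*} [CommRing R] [AddCommGroup M] [Module R M]

/-- A submodule contained in a non-large one is non-large. -/
lemma notLarge_of_le {N K : Submodule R M} (hle : N ≤ K) (hK : ¬ IsLarge K) :
    ¬ IsLarge N := by
  intro hN
  apply hK
  intro L hL
  intro hKL
  apply hN L hL
  rw [eq_bot_iff] at hKL ⊢
  exact le_trans (inf_le_inf_right L hle) hKL

/-- Key element-level fact in comultiplication modules: if `x ∈ u`, `y ∈ v` with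
`u ⊓ v = ⊥`, then there is `r` with `r • x = x` and `r • y = 0`. -/
lemma factE (hc : IsComultiplication R M) {u v : Submodule R M} (huv : u ⊓ v = ⊥)
    {x y : M} (hx : x ∈ u) (hy : y ∈ v) : ∃ r : R, r • x = x ∧ r • y = 0 := by
  obtain ⟨I, hI⟩ := hc (Submodule.span R {x + y})
  have hkill : ∀ r ∈ I, r • (x + y) = 0 :=
    (hI (x + y)).mp (Submodule.mem_span_singleton_self _)
  have hkx : ∀ r ∈ I, r • x = 0 := by
    intro r hr
    have h0 : r • x + r • y = 0 := by rw [← smul_add]; exact hkill r hr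
    have hmem : r • x ∈ u ⊓ v := by
      refine ⟨u.smul_mem r hx, ?_⟩
      have : r • x = -(r • y) := eq_neg_of_add_eq_zero_left h0
      rw [this]
      exact v.neg_mem (v.smul_mem r hy)
    rw [huv] at hmem
    exact (Submodule.mem_bot R).mp hmem
  have hxmem : x ∈ Submodule.span R {x + y} := (hI x).mpr hkx
  obtain ⟨r, hr⟩ := Submodule.mem_span_singleton.mp hxmem
  -- hr : r • (x + y) = x
  have h1 : r • x - x = -(r • y) := by
    have : r • x + r • y = x := by rw [← smul_add]; exact hr
    have h2 : r • x + r • y - x = 0 := by rw [this]; abel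
    linear_combination (norm := abel) h2
  have hmem : r • x - x ∈ u ⊓ v := by
    refine ⟨sub_mem (u.smul_mem r hx) hx, ?_⟩
    rw [h1]
    exact v.neg_mem (v.smul_mem r hy)
  rw [huv] at hmem
  have hsub : r • x - x = 0 := (Submodule.mem_bot R).mp hmem
  refine ⟨r, sub_eq_zero.mp hsub, ?_⟩
  have := h1
  rw [hsub] at this
  have hy0 : -(r • y) = 0 := this.symm
  simpa [neg_eq_zero] using hy0

/-- Key submodule-level fact: if `W` misses `u` and `v`, it misses `u ⊔ v`. -/
lemma factF (hc : IsComultiplication R M) {u v W : Submodule R M}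
    (h1 : u ⊓ W = ⊥) (h2 : v ⊓ W = ⊥) : (u ⊔ v) ⊓ W = ⊥ := by
  rw [eq_bot_iff]
  intro e he
  obtain ⟨hesup, heW⟩ := he
  obtain ⟨x, hx, y, hy, hxy⟩ := Submodule.mem_sup.mp hesup
  have hWu : W ⊓ u = ⊥ := by rwa [inf_comm] at h1
  have hWv : W ⊓ v = ⊥ := by rwa [inf_comm] at h2
  obtain ⟨r, hre, hrx⟩ := factE hc hWu heW hx
  obtain ⟨s, hse, hsy⟩ := factE hc hWv heW hy
  have he0 : e = 0 := by
    calc e = r • (s • e) := by rw [hse, hre]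
    _ = (r * s) • e := by rw [mul_smul]
    _ = (r * s) • (x + y) := by rw [hxy]
    _ = (r * s) • x + (r * s) • y := smul_add _ _ _
    _ = 0 := by
        have hx0 : (r * s) • x = 0 := by rw [mul_comm, mul_smul, hrx, smul_zero]
        have hy0 : (r * s) • y = 0 := by rw [mul_smul, hsy, smul_zero]
        rw [hx0, hy0, add_zero]
  simp [he0]

/-- The core contradiction: in a comultiplication module there is no configuration
`u, p, m, v` with `u ⊔ m` and `p ⊔ v` large, `p ⊔ m` not large and `u ⊓ v = ⊥`. -/
lemma keyContra (hc : IsComultiplication R M) {u p m v : Submodule R M}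
    (h1 : IsLarge (u ⊔ m)) (h2 : IsLarge (p ⊔ v)) (h3 : ¬ IsLarge (p ⊔ m))
    (h4 : u ⊓ v = ⊥) : False := by
  rw [IsLarge] at h3
  push_neg at h3
  obtain ⟨D, hD0, hD⟩ := h3
  have hpD : p ⊓ D = ⊥ := by
    rw [eq_bot_iff]
    rw [eq_bot_iff] at hD
    exact le_trans (inf_le_inf_right D le_sup_left) hD
  have hmD : m ⊓ D = ⊥ := by
    rw [eq_bot_iff]
    rw [eq_bot_iff] at hD
    exact le_trans (inf_le_inf_right D le_sup_right) hD
  have hA : u ⊓ D ≠ ⊥ := by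
    intro hA0
    exact h1 D hD0 (factF hc hA0 hmD)
  set A := u ⊓ D with hAdef
  have hpA : p ⊓ A = ⊥ := by
    rw [eq_bot_iff]
    rw [eq_bot_iff] at hpD
    exact le_trans (inf_le_inf_right A le_rfl |>.trans (inf_le_inf_left p inf_le_right)) hpD
  have hvA : v ⊓ A = ⊥ := by
    rw [eq_bot_iff]
    have : v ⊓ A ≤ v ⊓ u := inf_le_inf_left v inf_le_left
    rw [inf_comm v u, h4] at this
    exact this
  exact h2 A hA (factF hc hpA hvA)

end Aux

section Graph

variable {R M : Type*} [CommRing R] [AddCommGroup M] [Module R M]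

/-- If two nonadjacent distinct vertices have nonzero intersection, they have a
common neighbor. -/
lemma common_neighbor {u v : LargeSumVtx R M}
    (hlarge : IsLarge (u.1 ⊔ v.1)) (hmeet : u.1 ⊓ v.1 ≠ ⊥) :
    ∃ w : LargeSumVtx R M, (largeSumGraph R M).Adj u w ∧ (largeSumGraph R M).Adj w v := by
  have hwNL : ¬ IsLarge (u.1 ⊓ v.1) := notLarge_of_le inf_le_left u.2.2
  refine ⟨⟨u.1 ⊓ v.1, hmeet, hwNL⟩, ⟨?_, ?_⟩, ?_, ?_⟩
  · -- u ≠ w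
    intro heq
    have : u.1 = u.1 ⊓ v.1 := congrArg Subtype.val heq
    have hle : u.1 ≤ v.1 := this ▸ inf_le_right
    have hsup : u.1 ⊔ v.1 = v.1 := sup_eq_right.mpr hle
    rw [hsup] at hlarge
    exact v.2.2 hlarge
  · -- ¬ IsLarge (u ⊔ (u ⊓ v))
    rw [sup_inf_self]
    exact u.2.2
  · -- w ≠ v
    intro heq
    have : u.1 ⊓ v.1 = v.1 := congrArg Subtype.val heq
    have hle : v.1 ≤ u.1 := by
      conv_lhs => rw [← this]
      exact inf_le_left
    have hsup : u.1 ⊔ v.1 = u.1 := sup_eq_left.mpr hle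
    rw [hsup] at hlarge
    exact u.2.2 hlarge
  · -- ¬ IsLarge ((u ⊓ v) ⊔ v)
    have : u.1 ⊓ v.1 ⊔ v.1 = v.1 := sup_eq_right.mpr inf_le_right
    rw [this]
    exact v.2.2

/-- Given any walk between two vertices, their distance is at most 2. -/
lemma walk_dist_le_two (hc : IsComultiplication R M) {u v : LargeSumVtx R M}
    (w : (largeSumGraph R M).Walk u v) : (largeSumGraph R M).dist u v ≤ 2 := by
  induction w with
  | nil => simp [SimpleGraph.dist_self]
  | @cons u p v hup w' ih =>
    -- ih : dist p v ≤ 2, hup : Adj u p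
    obtain ⟨ω, hω⟩ := w'.reachable.exists_walk_length_eq_dist
    have hωlen : ω.length ≤ 2 := by rw [hω]; exact ih
    cases ω with
    | nil =>
      -- p = v
      refine le_trans (SimpleGraph.dist_le (SimpleGraph.Walk.cons hup SimpleGraph.Walk.nil)) ?_
      simp
    | @cons _ a _ hpa ω1 =>
      cases ω1 with
      | nil =>
        -- p — a = v : walk u - p - v of length 2
        refine le_trans (SimpleGraph.dist_le
          (SimpleGraph.Walk.cons hup (SimpleGraph.Walk.cons hpa SimpleGraph.Walk.nil))) ?_
        simp
      | @cons _ b _ hab ω2 =>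
        cases ω2 with
        | cons h _ => simp [SimpleGraph.Walk.length_cons] at hωlen
        | nil =>
          -- walk u - p - a - v with Adj u p, Adj p a, Adj a v (hab : Adj a v)
          by_cases huv : (largeSumGraph R M).Adj u v
          · exact le_trans (SimpleGraph.dist_le (SimpleGraph.Walk.cons huv SimpleGraph.Walk.nil))
              (by norm_num)
          by_cases hequv : u = v
          · subst hequv; simp [SimpleGraph.dist_self]
          by_cases hua : (largeSumGraph R M).Adj u a
          · exact le_trans (SimpleGraph.dist_le
              (SimpleGraph.Walk.cons hua (SimpleGraph.Walk.cons hab SimpleGraph.Walk.nil)))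
              (by norm_num)
          by_cases hequa : u = a
          · subst hequa
            exact le_trans (SimpleGraph.dist_le (SimpleGraph.Walk.cons hab SimpleGraph.Walk.nil))
              (by norm_num)
          by_cases hpv : (largeSumGraph R M).Adj p v
          · exact le_trans (SimpleGraph.dist_le
              (SimpleGraph.Walk.cons hup (SimpleGraph.Walk.cons hpv SimpleGraph.Walk.nil)))
              (by norm_num)
          by_cases heqpv : p = v
          · subst heqpv
            exact le_trans (SimpleGraph.dist_le (SimpleGraph.Walk.cons hup SimpleGraph.Walk.nil))
              (by norm_num)
          -- now all sums u⊔v, u⊔a, p⊔v are large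
          have hLuv : IsLarge (u.1 ⊔ v.1) := by
            by_contra hL; exact huv ⟨hequv, hL⟩
          have hLua : IsLarge (u.1 ⊔ a.1) := by
            by_contra hL; exact hua ⟨hequa, hL⟩
          have hLpv : IsLarge (p.1 ⊔ v.1) := by
            by_contra hL; exact hpv ⟨heqpv, hL⟩
          by_cases hmeet : u.1 ⊓ v.1 = ⊥
          · exact absurd (keyContra hc hLua hLpv hpa.2 hmeet) id
          · obtain ⟨z, hz1, hz2⟩ := common_neighbor hLuv hmeet
            exact le_trans (SimpleGraph.dist_le
              (SimpleGraph.Walk.cons hz1 (SimpleGraph.Walk.cons hz2 SimpleGraph.Walk.nil)))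
              (by norm_num)

end Graph

/-- If the large sum graph of a nonzero comultiplication module is connected, its diameter is
at most `2`. -/
theorem stmt8 {R M : Type*} [CommRing R] [AddCommGroup M] [Module R M]
    [Nontrivial M] (hc : IsComultiplication R M)
    (h : (largeSumGraph R M).Connected) :
    ∀ u v : LargeSumVtx R M, (largeSumGraph R M).dist u v ≤ 2 := by
  intro u v
  obtain ⟨w⟩ := h.preconnected u v
  exact walk_dist_le_two hc w
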